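/- Let H be a Borel probability measure on ℝ and ν > 0. For x ∈ ℝ write f(x) = f_{H,ν}(x) = ∫ φ((x−τ)/ν) ν⁻¹ dH(τ) and S(x) = ∫ ((x−τ)/ν)² φ((x−τ)/ν) ν⁻¹ dH(τ), so that S(x)/f(x) is the posterior second moment of (x−τ)/ν and equals ν² f''(x)/f(x) + 1. Then for every x ∈ ℝ and every ρ ∈ (0, e⁻¹/√(2π)): (S(x)/f(x)) · ( ν f(x) / ((ν f(x)) ∨ ρ) ) ≤ log(1/(2πρ²)). -/

import Mathlib

open MeasureTheory

/-- The standard normal density `φ(t) = (2π)^{-1/2} exp(−t²/2)`. -/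
noncomputable def gaussPdf (t : ℝ) : ℝ := (Real.sqrt (2 * Real.pi))⁻¹ * Real.exp (-(t ^ 2) / 2)

/-- The Gaussian mixture density `f_{H,ν}(x) = ∫ φ((x−τ)/ν) ν⁻¹ dH(τ)`. -/
noncomputable def mixDens (H : Measure ℝ) (ν x : ℝ) : ℝ :=
  ∫ τ, gaussPdf ((x - τ) / ν) * ν⁻¹ ∂H

lemma two_pi_pos : (0:ℝ) < 2 * Real.pi := by positivity

lemma sqrt_two_pi_pos : (0:ℝ) < Real.sqrt (2 * Real.pi) := Real.sqrt_pos.mpr two_pi_pos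

lemma gaussPdf_pos (t : ℝ) : 0 < gaussPdf t := by
  unfold gaussPdf
  positivity

lemma gaussPdf_continuous : Continuous gaussPdf := by
  unfold gaussPdf
  exact continuous_const.mul (Real.continuous_exp.comp (by continuity))

lemma log_gaussPdf (t : ℝ) :
    Real.log (gaussPdf t) = -(Real.log (2 * Real.pi)) / 2 - t ^ 2 / 2 := by
  unfold gaussPdf
  rw [Real.log_mul (by positivity) (Real.exp_pos _).ne', Real.log_inv,
    Real.log_sqrt two_pi_pos.le, Real.log_exp]
  ring

lemma sq_eq_of_log (t : ℝ) :
    t ^ 2 = -Real.log (2 * Real.pi) - 2 * Real.log (gaussPdf t) := by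
  have := log_gaussPdf t
  linarith

lemma gaussPdf_le_one (t : ℝ) : gaussPdf t ≤ 1 := by
  unfold gaussPdf
  have h1 : (1:ℝ) ≤ Real.sqrt (2 * Real.pi) := by
    rw [show (1:ℝ) = Real.sqrt 1 by simp]
    exact Real.sqrt_le_sqrt (by nlinarith [Real.pi_gt_three])
  have h2 : Real.exp (-(t ^ 2) / 2) ≤ 1 := by
    rw [Real.exp_le_one_iff]
    nlinarith [sq_nonneg t]
  have h3 : (Real.sqrt (2 * Real.pi))⁻¹ ≤ 1 := by
    rw [inv_le_one_iff₀]; right; exact h1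
  nlinarith [Real.exp_pos (-(t ^ 2) / 2)]

lemma sq_mul_gaussPdf_le_one (t : ℝ) : t ^ 2 * gaussPdf t ≤ 1 := by
  unfold gaussPdf
  have hv : t ^ 2 / 2 ≤ Real.exp (t ^ 2 / 2 - 1) := by
    have := Real.add_one_le_exp (t ^ 2 / 2 - 1)
    linarith
  have h2 : t ^ 2 * Real.exp (-(t ^ 2) / 2) ≤ 2 * Real.exp (-1 : ℝ) := by
    have hexp : Real.exp (t ^ 2 / 2 - 1) * Real.exp (-(t ^ 2) / 2) = Real.exp (-1 : ℝ) := by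
      rw [← Real.exp_add]; ring_nf
    nlinarith [Real.exp_pos (-(t ^ 2) / 2), Real.exp_pos (t ^ 2 / 2 - 1)]
  have h3 : 2 * Real.exp (-1 : ℝ) ≤ 1 := by
    rw [Real.exp_neg]
    have h := Real.add_one_le_exp (1 : ℝ)
    have he : (0:ℝ) < Real.exp 1 := Real.exp_pos 1
    rw [mul_inv_le_iff₀ he]
    linarith
  have h1 : (Real.sqrt (2 * Real.pi))⁻¹ ≤ 1 := by
    rw [inv_le_one_iff₀]; right
    rw [show (1:ℝ) = Real.sqrt 1 by simp]
    exact Real.sqrt_le_sqrt (by nlinarith [Real.pi_gt_three])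
  nlinarith [mul_le_mul_of_nonneg_right h1 (mul_nonneg (Real.exp_pos (-(t^2)/2)).le (sq_nonneg t)),
    Real.exp_pos (-(t ^ 2) / 2), sq_nonneg t]

/-- Tangent-line bound for the concave map `p ↦ p·(−log(2π) − 2 log p)` at `M`. -/
lemma tangent_bound (t M : ℝ) (hM : 0 < M) :
    t ^ 2 * gaussPdf t ≤
      2 * M + (-Real.log (2 * Real.pi) - 2 * Real.log M - 2) * gaussPdf t := by
  set p := gaussPdf t with hp
  have hp0 : 0 < p := gaussPdf_pos t
  have hsq : t ^ 2 = -Real.log (2 * Real.pi) - 2 * Real.log p := sq_eq_of_log t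
  have hlog : Real.log (M / p) ≤ M / p - 1 := Real.log_le_sub_one_of_pos (by positivity)
  have hlog2 : Real.log (M / p) = Real.log M - Real.log p := Real.log_div hM.ne' hp0.ne'
  have hmul : p * Real.log (M / p) ≤ p * (M / p - 1) :=
    mul_le_mul_of_nonneg_left hlog hp0.le
  have hMp : p * (M / p - 1) = M - p := by field_simp
  rw [hsq]
  rw [hlog2] at hmul
  nlinarith [hmul]

/-- Jiang–Zhang second-moment bound: with `f = f_{H,ν}` and
`S(x) = ∫ ((x−τ)/ν)² φ((x−τ)/ν) ν⁻¹ dH(τ)` (so `S/f` is the posterior second moment of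
`(x−τ)/ν`), for every `x` and every `ρ ∈ (0, e⁻¹/√(2π))`,
`(S(x)/f(x)) · (ν f(x) / ((ν f(x)) ∨ ρ)) ≤ log(1/(2πρ²))`. -/
theorem truncated_posterior_second_moment_bound
    (H : Measure ℝ) [IsProbabilityMeasure H] (ν : ℝ) (hν : 0 < ν)
    (x : ℝ) (ρ : ℝ)
    (hρ : ρ ∈ Set.Ioo (0:ℝ) ((Real.exp 1)⁻¹ / Real.sqrt (2 * Real.pi))) :
    (∫ τ, ((x - τ) / ν) ^ 2 * gaussPdf ((x - τ) / ν) * ν⁻¹ ∂H) / mixDens H ν x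
        * ((ν * mixDens H ν x) / ((ν * mixDens H ν x) ⊔ ρ))
      ≤ Real.log (1 / (2 * Real.pi * ρ ^ 2)) := by
  obtain ⟨hρ0, hρ1⟩ := hρ
  set k : ℝ → ℝ := fun τ => gaussPdf ((x - τ) / ν) with hk
  have hkcont : Continuous k := gaussPdf_continuous.comp (by continuity)
  have hkpos : ∀ τ, 0 < k τ := fun τ => gaussPdf_pos _
  have hIntf : Integrable k H := by
    refine Integrable.mono' (integrable_const 1) hkcont.aestronglyMeasurable
      (ae_of_all _ fun τ => ?_)
    rw [Real.norm_eq_abs, abs_of_pos (hkpos τ)]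
    exact gaussPdf_le_one _
  have hIntS : Integrable (fun τ => ((x - τ) / ν) ^ 2 * k τ) H := by
    refine Integrable.mono' (integrable_const 1)
      ((continuous_pow 2 |>.comp (by continuity)).mul hkcont).aestronglyMeasurable
      (ae_of_all _ fun τ => ?_)
    rw [Real.norm_eq_abs, abs_of_nonneg (mul_nonneg (sq_nonneg _) (hkpos τ).le)]
    exact sq_mul_gaussPdf_le_one _
  set F : ℝ := ∫ τ, k τ ∂H with hF
  set SS : ℝ := ∫ τ, ((x - τ) / ν) ^ 2 * k τ ∂H with hSS
  have hFpos : 0 < F := by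
    rw [hF, integral_pos_iff_support_of_nonneg (fun τ => (hkpos τ).le) hIntf]
    have : Function.support k = Set.univ := Set.eq_univ_of_forall fun τ => (hkpos τ).ne'
    rw [this]
    simp
  -- identify mixDens and the S integral
  have hmix : mixDens H ν x = F * ν⁻¹ := by
    rw [mixDens, hF]
    exact integral_mul_const _ _
  have hSint : (∫ τ, ((x - τ) / ν) ^ 2 * gaussPdf ((x - τ) / ν) * ν⁻¹ ∂H) = SS * ν⁻¹ := by
    rw [hSS]
    exact integral_mul_const _ _
  have hνf : ν * mixDens H ν x = F := by
    rw [hmix]; field_simp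
  set L : ℝ := Real.log (1 / (2 * Real.pi * ρ ^ 2)) with hLdef
  have hL : L = -Real.log (2 * Real.pi) - 2 * Real.log ρ := by
    rw [hLdef, one_div, Real.log_inv, Real.log_mul two_pi_pos.ne' (pow_ne_zero 2 hρ0.ne'),
      Real.log_pow]
    push_cast
    ring
  have hL2 : 2 < L := by
    have hsq : ρ ^ 2 * (2 * Real.pi) < Real.exp (-2 : ℝ) := by
      have hc : ρ * Real.sqrt (2 * Real.pi) < (Real.exp 1)⁻¹ := by
        rw [← lt_div_iff₀ sqrt_two_pi_pos]
        exact hρ1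
      have h2 : (ρ * Real.sqrt (2 * Real.pi)) ^ 2 < ((Real.exp 1)⁻¹) ^ 2 := by
        exact pow_lt_pow_left₀ hc (by positivity) two_ne_zero
      rw [mul_pow, Real.sq_sqrt two_pi_pos.le] at h2
      rw [show Real.exp (-2 : ℝ) = ((Real.exp 1)⁻¹) ^ 2 by
        rw [← Real.exp_neg, sq, ← Real.exp_add]; norm_num]
      exact h2
    have hlog : Real.log (2 * Real.pi * ρ ^ 2) < -2 := by
      have := Real.log_lt_log (by positivity) (by linarith [hsq] : 2 * Real.pi * ρ ^ 2 < Real.exp (-2 : ℝ))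
      rwa [Real.log_exp] at this
    have : L = -Real.log (2 * Real.pi * ρ ^ 2) := by
      rw [hLdef, one_div, Real.log_inv]
    linarith [this ▸ (by linarith : (2:ℝ) < -Real.log (2 * Real.pi * ρ ^ 2))]
  set M : ℝ := F ⊔ ρ with hMdef
  have hMpos : 0 < M := lt_sup_of_lt_right hρ0
  set B : ℝ := -Real.log (2 * Real.pi) - 2 * Real.log M - 2 with hB
  have hmono : SS ≤ 2 * M + B * F := by
    have hInt2 : Integrable (fun τ => 2 * M + B * k τ) H :=
      (integrable_const _).add (hIntf.const_mul B)
    calc SS ≤ ∫ τ, (2 * M + B * k τ) ∂H :=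
          integral_mono hIntS hInt2 (fun τ => tangent_bound _ M hMpos)
      _ = 2 * M + B * F := by
          rw [integral_add (integrable_const _) (hIntf.const_mul B), integral_const,
            integral_const_mul, probReal_univ, one_smul, ← hF]
  have hfinal : 2 * M + B * F ≤ L * M := by
    rcases le_total ρ F with hcase | hcase
    · have hMF : M = F := sup_eq_left.mpr hcase
      have hlog : Real.log ρ ≤ Real.log F := Real.log_le_log hρ0 hcase
      rw [hMF] at hB ⊢
      rw [hL, hB]
      nlinarith [hFpos, hlog]
    · have hMρ : M = ρ := sup_eq_right.mpr hcase
      have hBL : B = L - 2 := by rw [hB, hMρ, hL]; try ring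
      rw [hMρ, hBL]
      nlinarith [hL2, hFpos, hcase]
  -- assemble
  rw [hSint, hνf, hmix]
  have hcalc : SS * ν⁻¹ / (F * ν⁻¹) * (F / (F ⊔ ρ)) = SS / M := by
    rw [mul_div_mul_right _ _ (by positivity : (ν:ℝ)⁻¹ ≠ 0), ← hMdef]
    field_simp
  rw [hcalc, div_le_iff₀ hMpos]
  linarith
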